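/- Let F be a one-dimensional commutative formal group law over a commutative ring R, with a₁₁, a₁₂, a₁₃, a₂₂ ∈ R the coefficients of xy, x²y, x³y, x²y² in F respectively, and let g ∈ R[[x,y]] be the unique series with F(x,y) = x + y - xy·g(x,y). Then the series g(x -_F y, y -_F x) and -a₁₁ - (a₁₁a₁₂ + 2a₁₃ - a₂₂)(x - y)² have equal coefficients in all total degrees < 3. -/

import Mathlib

/-!
Formal group law preliminaries: substitution of (multivariate) formal power series,
the definition of a one-dimensional commutative formal group law, its formal inverse,
and the formal difference `x -_F y := F(x, ι(y))`.
-/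

noncomputable section

open MvPowerSeries

/-- Substitution `f(a 0, a 1, …)` of multivariate power series (the intended use is when
each `a i` has zero constant coefficient): the coefficient at `e` only receives
contributions from monomials of `f` with exponent `d` such that each `d i` is at most the
total degree of `e`. -/
def MvPowerSeries.substSeries {σ τ R : Type*} [Fintype σ] [DecidableEq σ] [CommRing R]
    (a : σ → MvPowerSeries τ R) (f : MvPowerSeries σ R) : MvPowerSeries τ R :=
  fun e => ∑ d ∈ Finset.Iic (Finsupp.equivFunOnFinite.symm fun _ : σ => e.sum fun _ n => n),
    MvPowerSeries.coeff (R := R) d f * MvPowerSeries.coeff (R := R) e (∏ i, (a i) ^ d i)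

/-- A one-dimensional commutative formal group law over a commutative ring `R`:
a power series `F ∈ R[[x,y]]` with `F(x,0) = x`, `F(0,y) = y`, `F(x,y) = F(y,x)` and
`F(F(x,y),z) = F(x,F(y,z))` (an identity of power series in `R[[x,y,z]]`). -/
structure IsFormalGroupLaw (R : Type*) [CommRing R] (F : MvPowerSeries (Fin 2) R) : Prop where
  subst_zero_right :
    MvPowerSeries.substSeries (![X 0, 0] : Fin 2 → MvPowerSeries (Fin 2) R) F = X 0
  subst_zero_left :
    MvPowerSeries.substSeries (![0, X 1] : Fin 2 → MvPowerSeries (Fin 2) R) F = X 1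
  comm :
    MvPowerSeries.substSeries (![X 1, X 0] : Fin 2 → MvPowerSeries (Fin 2) R) F = F
  assoc :
    MvPowerSeries.substSeries
      (![MvPowerSeries.substSeries (![X 0, X 1] : Fin 2 → MvPowerSeries (Fin 3) R) F, X 2] :
        Fin 2 → MvPowerSeries (Fin 3) R) F
    = MvPowerSeries.substSeries
      (![X 0, MvPowerSeries.substSeries (![X 1, X 2] : Fin 2 → MvPowerSeries (Fin 3) R) F] :
        Fin 2 → MvPowerSeries (Fin 3) R) F

/-- `ι` is the formal inverse of the formal group law `F`: a univariate power series with
zero constant term such that `F(x, ι(x)) = 0`. -/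
def IsFormalInverse {R : Type*} [CommRing R] (F : MvPowerSeries (Fin 2) R)
    (ι : PowerSeries R) : Prop :=
  PowerSeries.constantCoeff (R := R) ι = 0 ∧
    MvPowerSeries.substSeries (![PowerSeries.X, ι] : Fin 2 → PowerSeries R) F = 0

/-- The formal difference `x -_F y := F(x, ι(y))`. -/
def fDiff {R : Type*} [CommRing R] (F : MvPowerSeries (Fin 2) R) (ι : PowerSeries R) :
    MvPowerSeries (Fin 2) R :=
  MvPowerSeries.substSeries
    (![X 0, MvPowerSeries.substSeries (fun _ : Unit => (X 1 : MvPowerSeries (Fin 2) R)) ι] :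
      Fin 2 → MvPowerSeries (Fin 2) R) F

/-- The formal difference `y -_F x := F(y, ι(x))`. -/
def fDiffSwap {R : Type*} [CommRing R] (F : MvPowerSeries (Fin 2) R) (ι : PowerSeries R) :
    MvPowerSeries (Fin 2) R :=
  MvPowerSeries.substSeries
    (![X 1, MvPowerSeries.substSeries (fun _ : Unit => (X 0 : MvPowerSeries (Fin 2) R)) ι] :
      Fin 2 → MvPowerSeries (Fin 2) R) F

def cf (R : Type*) [CommRing R] (i j : ℕ) (f : MvPowerSeries (Fin 2) R) : R :=
  MvPowerSeries.coeff (R := R) (Finsupp.single 0 i + Finsupp.single 1 j) f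

section Infra
variable {R : Type*} [CommRing R]

lemma fin2_eq (d : Fin 2 →₀ ℕ) : d = Finsupp.single 0 (d 0) + Finsupp.single 1 (d 1) := by
  ext x; fin_cases x <;> simp

lemma fin2_sum (i j : ℕ) :
    (Finsupp.single (0:Fin 2) i + Finsupp.single 1 j : Fin 2 →₀ ℕ).sum (fun _ n => n) = i + j := by
  classical
  rw [Finsupp.sum_fintype] <;> simp [Fin.sum_univ_two]

lemma unit_sum (k : ℕ) :
    (Finsupp.single () k : Unit →₀ ℕ).sum (fun _ n => n) = k := by
  classical
  rw [Finsupp.sum_fintype] <;> simp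

lemma unit_eq (d : Unit →₀ ℕ) : d = Finsupp.single () (d ()) := by
  ext; simp

lemma fin2_apply0 (i j : ℕ) :
    ((Finsupp.single (0:Fin 2) i + Finsupp.single 1 j : Fin 2 →₀ ℕ)) 0 = i := by simp
lemma fin2_apply1 (i j : ℕ) :
    ((Finsupp.single (0:Fin 2) i + Finsupp.single 1 j : Fin 2 →₀ ℕ)) 1 = j := by simp

variable {M : Type*} [AddCommMonoid M]

lemma sum_Iic_fin2 (n : ℕ) (F : (Fin 2 →₀ ℕ) → M) :
    ∑ d ∈ Finset.Iic (Finsupp.equivFunOnFinite.symm fun _ : Fin 2 => n), F d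
      = ∑ i ∈ Finset.range (n+1), ∑ j ∈ Finset.range (n+1),
          F (Finsupp.single 0 i + Finsupp.single 1 j) := by
  rw [← Finset.sum_product']
  refine Finset.sum_nbij' (fun d => (d 0, d 1))
    (fun p => Finsupp.single 0 p.1 + Finsupp.single 1 p.2) ?_ ?_ ?_ ?_ ?_
  · intro d hd
    simp only [Finset.mem_Iic, Finsupp.le_def] at hd
    simp only [Finset.mem_product, Finset.mem_range, Nat.lt_succ_iff]
    exact ⟨by simpa using hd 0, by simpa using hd 1⟩
  · intro p hp
    simp only [Finset.mem_product, Finset.mem_range, Nat.lt_succ_iff] at hp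
    simp only [Finset.mem_Iic, Finsupp.le_def]
    intro x
    fin_cases x <;> simp [hp.1, hp.2]
  · intro d _; exact (fin2_eq d).symm
  · intro p _; simp
  · intro d _; exact congrArg F (fin2_eq d)

lemma sum_Iic_unit (n : ℕ) (F : (Unit →₀ ℕ) → M) :
    ∑ d ∈ Finset.Iic (Finsupp.equivFunOnFinite.symm fun _ : Unit => n), F d
      = ∑ k ∈ Finset.range (n+1), F (Finsupp.single () k) := by
  refine Finset.sum_nbij' (fun d => d ()) (fun k => Finsupp.single () k) ?_ ?_ ?_ ?_ ?_
  · intro d hd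
    simp only [Finset.mem_Iic, Finsupp.le_def] at hd
    simp only [Finset.mem_range, Nat.lt_succ_iff]
    simpa using hd ()
  · intro k hk
    simp only [Finset.mem_range, Nat.lt_succ_iff] at hk
    simp only [Finset.mem_Iic, Finsupp.le_def]
    intro x; cases x; simpa using hk
  · intro d _; exact (unit_eq d).symm
  · intro p _; simp
  · intro d _; exact congrArg F (unit_eq d)

lemma coeff_substSeries {σ τ : Type*} [Fintype σ] [DecidableEq σ]
    (a : σ → MvPowerSeries τ R) (f : MvPowerSeries σ R) (e : τ →₀ ℕ) :
    MvPowerSeries.coeff (R := R) e (MvPowerSeries.substSeries a f)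
      = ∑ d ∈ Finset.Iic (Finsupp.equivFunOnFinite.symm fun _ : σ => e.sum fun _ n => n),
          MvPowerSeries.coeff (R := R) d f * MvPowerSeries.coeff (R := R) e (∏ i, (a i) ^ d i) := rfl

lemma cf_substSeries (a : Fin 2 → MvPowerSeries (Fin 2) R) (f : MvPowerSeries (Fin 2) R)
    (m n : ℕ) :
    cf R m n (MvPowerSeries.substSeries a f)
      = ∑ i ∈ Finset.range (m+n+1), ∑ j ∈ Finset.range (m+n+1),
          cf R i j f * cf R m n (a 0 ^ i * a 1 ^ j) := by
  rw [cf, coeff_substSeries, fin2_sum, sum_Iic_fin2]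
  refine Finset.sum_congr rfl fun i _ => Finset.sum_congr rfl fun j _ => ?_
  rw [Fin.prod_univ_two, fin2_apply0, fin2_apply1]
  rfl

lemma pcoeff_substSeries (a : Fin 2 → PowerSeries R) (f : MvPowerSeries (Fin 2) R) (k : ℕ) :
    PowerSeries.coeff (R := R) k (MvPowerSeries.substSeries a f)
      = ∑ i ∈ Finset.range (k+1), ∑ j ∈ Finset.range (k+1),
          cf R i j f * PowerSeries.coeff (R := R) k (a 0 ^ i * a 1 ^ j) := by
  rw [PowerSeries.coeff, coeff_substSeries, unit_sum, sum_Iic_fin2]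
  refine Finset.sum_congr rfl fun i _ => Finset.sum_congr rfl fun j _ => ?_
  rw [Fin.prod_univ_two, fin2_apply0, fin2_apply1]
  rfl

lemma cf_substSeries_unit (a : Unit → MvPowerSeries (Fin 2) R) (f : PowerSeries R)
    (m n : ℕ) :
    cf R m n (MvPowerSeries.substSeries a f)
      = ∑ k ∈ Finset.range (m+n+1),
          PowerSeries.coeff (R := R) k f * cf R m n (a () ^ k) := by
  rw [cf, coeff_substSeries, fin2_sum, sum_Iic_unit]
  refine Finset.sum_congr rfl fun k _ => ?_
  rw [Finset.prod_eq_single_of_mem () (Finset.mem_univ ()) (by intro b _ hb; cases b; simp at hb),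
    Finsupp.single_eq_same]
  rfl
lemma cf_mul (m n : ℕ) (φ ψ : MvPowerSeries (Fin 2) R) :
    cf R m n (φ * ψ) = ∑ i ∈ Finset.range (m+1), ∑ j ∈ Finset.range (n+1),
      cf R i j φ * cf R (m-i) (n-j) ψ := by
  classical
  rw [cf, MvPowerSeries.coeff_mul, ← Finset.sum_product']
  refine Finset.sum_nbij' (fun p => (p.1 0, p.1 1))
    (fun q => (Finsupp.single 0 q.1 + Finsupp.single 1 q.2,
               Finsupp.single 0 (m - q.1) + Finsupp.single 1 (n - q.2))) ?_ ?_ ?_ ?_ ?_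
  · intro p hp
    rw [Finset.HasAntidiagonal.mem_antidiagonal] at hp
    have h0 : p.1 0 + p.2 0 = m := by
      have := congrArg (fun f : Fin 2 →₀ ℕ => f 0) hp; simpa using this
    have h1 : p.1 1 + p.2 1 = n := by
      have := congrArg (fun f : Fin 2 →₀ ℕ => f 1) hp; simpa using this
    simp only [Finset.mem_product, Finset.mem_range, Nat.lt_succ_iff]
    omega
  · intro q hq
    simp only [Finset.mem_product, Finset.mem_range, Nat.lt_succ_iff] at hq
    rw [Finset.HasAntidiagonal.mem_antidiagonal]
    ext x; fin_cases x <;> simp <;> omega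
  · intro p hp
    rw [Finset.HasAntidiagonal.mem_antidiagonal] at hp
    have h0 : p.1 0 + p.2 0 = m := by
      have := congrArg (fun f : Fin 2 →₀ ℕ => f 0) hp; simpa using this
    have h1 : p.1 1 + p.2 1 = n := by
      have := congrArg (fun f : Fin 2 →₀ ℕ => f 1) hp; simpa using this
    have hm : m - p.1 0 = p.2 0 := by omega
    have hn : n - p.1 1 = p.2 1 := by omega
    refine Prod.ext (fin2_eq p.1).symm ?_
    show (Finsupp.single 0 (m - p.1 0) + Finsupp.single 1 (n - p.1 1) : Fin 2 →₀ ℕ) = p.2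
    rw [hm, hn]; exact (fin2_eq p.2).symm
  · intro q _; simp
  · intro p hp
    rw [Finset.HasAntidiagonal.mem_antidiagonal] at hp
    have h0 : p.1 0 + p.2 0 = m := by
      have := congrArg (fun f : Fin 2 →₀ ℕ => f 0) hp; simpa using this
    have h1 : p.1 1 + p.2 1 = n := by
      have := congrArg (fun f : Fin 2 →₀ ℕ => f 1) hp; simpa using this
    have hm : m - p.1 0 = p.2 0 := by omega
    have hn : n - p.1 1 = p.2 1 := by omega
    simp only [cf]
    rw [← fin2_eq p.1]
    show _ = _ * (coeff (R := R) (Finsupp.single 0 (m - p.1 0) + Finsupp.single 1 (n - p.1 1))) ψ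
    rw [hm, hn, ← fin2_eq p.2]

lemma fin2_single_eq_iff (m n i j : ℕ) :
    ((Finsupp.single (0:Fin 2) m + Finsupp.single 1 n : Fin 2 →₀ ℕ)
      = Finsupp.single 0 i + Finsupp.single 1 j) ↔ (m = i ∧ n = j) := by
  constructor
  · intro h
    constructor
    · have := congrArg (fun f : Fin 2 →₀ ℕ => f 0) h; simpa using this
    · have := congrArg (fun f : Fin 2 →₀ ℕ => f 1) h; simpa using this
  · rintro ⟨rfl, rfl⟩; rfl

@[simp] lemma cf_zero (m n : ℕ) : cf R m n (0 : MvPowerSeries (Fin 2) R) = 0 := by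
  simp [cf]

@[simp] lemma cf_add (m n : ℕ) (φ ψ : MvPowerSeries (Fin 2) R) :
    cf R m n (φ + ψ) = cf R m n φ + cf R m n ψ := by simp [cf]

@[simp] lemma cf_sub (m n : ℕ) (φ ψ : MvPowerSeries (Fin 2) R) :
    cf R m n (φ - ψ) = cf R m n φ - cf R m n ψ := by simp [cf]

@[simp] lemma cf_neg (m n : ℕ) (φ : MvPowerSeries (Fin 2) R) :
    cf R m n (-φ) = -cf R m n φ := by simp [cf]

@[simp] lemma cf_one (m n : ℕ) : cf R m n (1 : MvPowerSeries (Fin 2) R) =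
    if m = 0 ∧ n = 0 then 1 else 0 := by
  classical
  have h1 : (1 : MvPowerSeries (Fin 2) R) = monomial (R := R) (0 : Fin 2 →₀ ℕ) (1:R) := by simp
  rw [cf, h1, MvPowerSeries.coeff_monomial]
  congr 1
  rw [show (0 : Fin 2 →₀ ℕ) = Finsupp.single 0 0 + Finsupp.single 1 0 by simp]
  rw [eq_iff_iff]
  exact fin2_single_eq_iff m n 0 0

@[simp] lemma cf_C (m n : ℕ) (r : R) : cf R m n (MvPowerSeries.C (σ := Fin 2) (R := R) r) =
    if m = 0 ∧ n = 0 then r else 0 := by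
  classical
  have : (MvPowerSeries.C (σ := Fin 2) (R := R) r) = monomial (R := R) (0 : Fin 2 →₀ ℕ) r := rfl
  rw [cf, this, MvPowerSeries.coeff_monomial]
  congr 1
  rw [show (0 : Fin 2 →₀ ℕ) = Finsupp.single 0 0 + Finsupp.single 1 0 by simp, eq_iff_iff]
  exact fin2_single_eq_iff m n 0 0

@[simp] lemma cf_XX (m n i j : ℕ) :
    cf R m n ((X 0 : MvPowerSeries (Fin 2) R) ^ i * X 1 ^ j) =
      if m = i ∧ n = j then 1 else 0 := by
  classical
  rw [X_pow_eq, X_pow_eq, monomial_mul_monomial, one_mul, cf, MvPowerSeries.coeff_monomial]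
  congr 1
  rw [eq_iff_iff]
  exact fin2_single_eq_iff m n i j

@[simp] lemma cf_X0_pow (m n i : ℕ) :
    cf R m n ((X 0 : MvPowerSeries (Fin 2) R) ^ i) = if m = i ∧ n = 0 then 1 else 0 := by
  have := cf_XX (R := R) m n i 0
  rwa [pow_zero, mul_one] at this

@[simp] lemma cf_X1_pow (m n j : ℕ) :
    cf R m n ((X 1 : MvPowerSeries (Fin 2) R) ^ j) = if m = 0 ∧ n = j then 1 else 0 := by
  have := cf_XX (R := R) m n 0 j
  rwa [pow_zero, one_mul] at this

@[simp] lemma cf_X0 (m n : ℕ) :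
    cf R m n ((X 0 : MvPowerSeries (Fin 2) R)) = if m = 1 ∧ n = 0 then 1 else 0 := by
  have := cf_X0_pow (R := R) m n 1
  rwa [pow_one] at this

@[simp] lemma cf_X1 (m n : ℕ) :
    cf R m n ((X 1 : MvPowerSeries (Fin 2) R)) = if m = 0 ∧ n = 1 then 1 else 0 := by
  have := cf_X1_pow (R := R) m n 1
  rwa [pow_one] at this

lemma cf_mul_low {φ ψ : MvPowerSeries (Fin 2) R} {p q : ℕ}
    (hφ : ∀ i j, i + j ≤ p → cf R i j φ = 0) (hψ : ∀ i j, i + j ≤ q → cf R i j ψ = 0) :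
    ∀ m n, m + n ≤ p + q + 1 → cf R m n (φ * ψ) = 0 := by
  intro m n hmn
  rw [cf_mul]
  refine Finset.sum_eq_zero fun i hi => Finset.sum_eq_zero fun j hj => ?_
  simp only [Finset.mem_range, Nat.lt_succ_iff] at hi hj
  by_cases h : i + j ≤ p
  · rw [hφ i j h, zero_mul]
  · rw [hψ (m-i) (n-j) (by omega), mul_zero]
end Infra

section PS
variable {R : Type*} [CommRing R]
open PowerSeries

lemma ps_pow_low {f : PowerSeries R} (h : PowerSeries.constantCoeff (R := R) f = 0) {j m : ℕ}
    (hm : m < j) : PowerSeries.coeff (R := R) m (f ^ j) = 0 := by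
  have : (PowerSeries.X : PowerSeries R) ^ j ∣ f ^ j :=
    pow_dvd_pow_of_dvd (PowerSeries.X_dvd_iff.mpr h) j
  exact PowerSeries.X_pow_dvd_iff.mp this m hm

lemma ps_coeff_sq (f : PowerSeries R) (h : PowerSeries.constantCoeff (R := R) f = 0) :
    (PowerSeries.coeff (R := R) 2 (f ^ 2) = (PowerSeries.coeff (R := R) 1 f) ^ 2) ∧
    (PowerSeries.coeff (R := R) 3 (f ^ 2)
      = 2 * PowerSeries.coeff (R := R) 1 f * PowerSeries.coeff (R := R) 2 f) := by
  have h0 : PowerSeries.coeff (R := R) 0 f = 0 := by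
    rwa [PowerSeries.coeff_zero_eq_constantCoeff]
  constructor
  · rw [pow_two, PowerSeries.coeff_mul]
    rw [Finset.Nat.sum_antidiagonal_eq_sum_range_succ_mk]
    simp [Finset.sum_range_succ, h0]
    ring
  · rw [pow_two, PowerSeries.coeff_mul]
    rw [Finset.Nat.sum_antidiagonal_eq_sum_range_succ_mk]
    simp [Finset.sum_range_succ, h0]
    ring

lemma ps_coeff_cube (f : PowerSeries R) (h : PowerSeries.constantCoeff (R := R) f = 0) :
    PowerSeries.coeff (R := R) 3 (f ^ 3) = (PowerSeries.coeff (R := R) 1 f) ^ 3 := by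
  have h0 : PowerSeries.coeff (R := R) 0 f = 0 := by
    rwa [PowerSeries.coeff_zero_eq_constantCoeff]
  have h2 : ∀ m : ℕ, m < 2 → PowerSeries.coeff (R := R) m (f ^ 2) = 0 := fun m hm => ps_pow_low h hm
  rw [pow_succ, PowerSeries.coeff_mul, Finset.Nat.sum_antidiagonal_eq_sum_range_succ_mk]
  simp [Finset.sum_range_succ, h0, h2 0 (by norm_num), h2 1 (by norm_num),
    (ps_coeff_sq f h).1]
  ring
end PS

section T2
variable {R : Type*} [CommRing R]

@[simp] lemma cf_XX' (m n i j : ℕ) :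
    cf R m n ((X 1 : MvPowerSeries (Fin 2) R) ^ i * X 0 ^ j) =
      if m = j ∧ n = i then 1 else 0 := by
  rw [mul_comm]; exact cf_XX m n j i

@[simp] lemma cf_X0_mul_X1_pow (m n j : ℕ) :
    cf R m n ((X 0 : MvPowerSeries (Fin 2) R) * X 1 ^ j) = if m = 1 ∧ n = j then 1 else 0 := by
  have := cf_XX (R := R) m n 1 j; rwa [pow_one] at this

@[simp] lemma cf_X0_pow_mul_X1 (m n i : ℕ) :
    cf R m n ((X 0 : MvPowerSeries (Fin 2) R) ^ i * X 1) = if m = i ∧ n = 1 then 1 else 0 := by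
  have := cf_XX (R := R) m n i 1; rwa [pow_one] at this

@[simp] lemma cf_X0_mul_X1' (m n : ℕ) :
    cf R m n ((X 0 : MvPowerSeries (Fin 2) R) * X 1) = if m = 1 ∧ n = 1 then 1 else 0 := by
  have := cf_XX (R := R) m n 1 1; rwa [pow_one, pow_one] at this

@[simp] lemma cf_X1_mul_X0_pow (m n j : ℕ) :
    cf R m n ((X 1 : MvPowerSeries (Fin 2) R) * X 0 ^ j) = if m = j ∧ n = 1 then 1 else 0 := by
  have := cf_XX' (R := R) m n 1 j; rwa [pow_one] at this

@[simp] lemma cf_X1_pow_mul_X0 (m n i : ℕ) :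
    cf R m n ((X 1 : MvPowerSeries (Fin 2) R) ^ i * X 0) = if m = 1 ∧ n = i then 1 else 0 := by
  have := cf_XX' (R := R) m n i 1; rwa [pow_one] at this

@[simp] lemma cf_X1_mul_X0' (m n : ℕ) :
    cf R m n ((X 1 : MvPowerSeries (Fin 2) R) * X 0) = if m = 1 ∧ n = 1 then 1 else 0 := by
  have := cf_XX' (R := R) m n 1 1; rwa [pow_one, pow_one] at this

example (F : MvPowerSeries (Fin 2) R) (hF : IsFormalGroupLaw R F) :
    cf R 1 2 F = cf R 2 1 F ∧ cf R 1 3 F = cf R 3 1 F := by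
  have h1 := congrArg (cf R 1 2) hF.comm
  have h2 := congrArg (cf R 1 3) hF.comm
  rw [cf_substSeries] at h1 h2
  simp [Finset.sum_range_succ] at h1 h2
  exact ⟨h1.symm, h2.symm⟩

@[simp] lemma cf_C_mul (m n : ℕ) (r : R) (φ : MvPowerSeries (Fin 2) R) :
    cf R m n (MvPowerSeries.C (σ := Fin 2) (R := R) r * φ) = r * cf R m n φ := by
  simp [cf]

lemma cf_shift (g : MvPowerSeries (Fin 2) R) (i j : ℕ) :
    cf R (i+1) (j+1) ((X 0 * X 1 : MvPowerSeries (Fin 2) R) * g) = cf R i j g := by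
  classical
  have hX : (X 0 * X 1 : MvPowerSeries (Fin 2) R)
      = monomial (R := R) (Finsupp.single 0 1 + Finsupp.single 1 1) 1 := by
    rw [X_def, X_def, monomial_mul_monomial, one_mul]
  have he : (Finsupp.single (0:Fin 2) (i+1) + Finsupp.single 1 (j+1) : Fin 2 →₀ ℕ)
      = (Finsupp.single 0 1 + Finsupp.single 1 1) + (Finsupp.single 0 i + Finsupp.single 1 j) := by
    ext x; fin_cases x <;> simp <;> omega
  rw [cf, hX, he, MvPowerSeries.coeff_add_monomial_mul, one_mul, cf]
end T2

set_option maxHeartbeats 3000000 in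
/-- Let `F` be a one-dimensional commutative formal group law over `R`,
with `a₁₁, a₁₂, a₁₃, a₂₂` the coefficients of `xy, x²y, x³y, x²y²` in `F`, and let `g` be
the unique series with `F(x,y) = x + y - xy·g(x,y)`. Then `g(x -_F y, y -_F x)` and
`-a₁₁ - (a₁₁a₁₂ + 2a₁₃ - a₂₂)(x-y)²` have equal coefficients in all total degrees `< 3`. -/
theorem fgl_g_of_fDiff_mod_deg3 {R : Type*} [CommRing R]
    (F : MvPowerSeries (Fin 2) R) (hF : IsFormalGroupLaw R F)
    (ι : PowerSeries R) (hι : IsFormalInverse F ι)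
    (a₁₁ a₁₂ a₁₃ a₂₂ : R)
    (ha₁₁ : a₁₁ = MvPowerSeries.coeff (R := R) (Finsupp.single 0 1 + Finsupp.single 1 1) F)
    (ha₁₂ : a₁₂ = MvPowerSeries.coeff (R := R) (Finsupp.single 0 2 + Finsupp.single 1 1) F)
    (ha₁₃ : a₁₃ = MvPowerSeries.coeff (R := R) (Finsupp.single 0 3 + Finsupp.single 1 1) F)
    (ha₂₂ : a₂₂ = MvPowerSeries.coeff (R := R) (Finsupp.single 0 2 + Finsupp.single 1 2) F)
    (g : MvPowerSeries (Fin 2) R) (hg : F = X 0 + X 1 - (X 0 * X 1) * g) :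
    ∀ d : Fin 2 →₀ ℕ, d 0 + d 1 < 3 →
      MvPowerSeries.coeff (R := R) d
        (MvPowerSeries.substSeries
          (![fDiff F ι, fDiffSwap F ι] : Fin 2 → MvPowerSeries (Fin 2) R) g) =
      MvPowerSeries.coeff (R := R) d
        (-(C (σ := Fin 2) (R := R) a₁₁)
          - C (σ := Fin 2) (R := R) (a₁₁ * a₁₂ + 2 * a₁₃ - a₂₂) * (X 0 - X 1) ^ 2) := by
  -- F coefficients from the unit axioms
  have hF00 : cf R 0 0 F = 0 := by
    have h := congrArg (cf R 0 0) hF.subst_zero_right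
    rw [cf_substSeries] at h
    simpa [Finset.sum_range_succ] using h
  have hF10 : cf R 1 0 F = 1 := by
    have h := congrArg (cf R 1 0) hF.subst_zero_right
    rw [cf_substSeries] at h
    simpa [Finset.sum_range_succ] using h
  have hF20 : cf R 2 0 F = 0 := by
    have h := congrArg (cf R 2 0) hF.subst_zero_right
    rw [cf_substSeries] at h
    simpa [Finset.sum_range_succ] using h
  have hF30 : cf R 3 0 F = 0 := by
    have h := congrArg (cf R 3 0) hF.subst_zero_right
    rw [cf_substSeries] at h
    simpa [Finset.sum_range_succ] using h
  have hF01 : cf R 0 1 F = 1 := by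
    have h := congrArg (cf R 0 1) hF.subst_zero_left
    rw [cf_substSeries] at h
    simpa [Finset.sum_range_succ] using h
  have hF02 : cf R 0 2 F = 0 := by
    have h := congrArg (cf R 0 2) hF.subst_zero_left
    rw [cf_substSeries] at h
    simpa [Finset.sum_range_succ] using h
  have hF03 : cf R 0 3 F = 0 := by
    have h := congrArg (cf R 0 3) hF.subst_zero_left
    rw [cf_substSeries] at h
    simpa [Finset.sum_range_succ] using h
  -- named coefficients
  have hF11 : cf R 1 1 F = a₁₁ := ha₁₁.symm
  have hF21 : cf R 2 1 F = a₁₂ := ha₁₂.symm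
  have hF31 : cf R 3 1 F = a₁₃ := ha₁₃.symm
  have hF22 : cf R 2 2 F = a₂₂ := ha₂₂.symm
  -- commutativity
  have hF12 : cf R 1 2 F = a₁₂ := by
    have h := congrArg (cf R 1 2) hF.comm
    rw [cf_substSeries] at h
    simp only [Finset.sum_range_succ] at h
    simp [Finset.sum_range_succ] at h
    rw [← h, hF21]
  have hF13 : cf R 1 3 F = a₁₃ := by
    have h := congrArg (cf R 1 3) hF.comm
    rw [cf_substSeries] at h
    simp [Finset.sum_range_succ] at h
    rw [← h, hF31]
  -- g coefficients
  have hgc : ∀ i j : ℕ, cf R i j g = -(cf R (i+1) (j+1) F) := by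
    intro i j
    have h := congrArg (cf R (i+1) (j+1)) hg
    rw [cf_sub, cf_add, cf_shift] at h
    simp at h
    rw [h, neg_neg]
  have hg00 : cf R 0 0 g = -a₁₁ := by rw [hgc, hF11]
  have hg10 : cf R 1 0 g = -a₁₂ := by rw [hgc, hF21]
  have hg01 : cf R 0 1 g = -a₁₂ := by rw [hgc, hF12]
  have hg20 : cf R 2 0 g = -a₁₃ := by rw [hgc, hF31]
  have hg11 : cf R 1 1 g = -a₂₂ := by rw [hgc, hF22]
  have hg02 : cf R 0 2 g = -a₁₃ := by rw [hgc, hF13]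
  -- iota coefficients
  have hι0 : PowerSeries.coeff (R := R) 0 ι = 0 := by
    rw [PowerSeries.coeff_zero_eq_constantCoeff]; exact hι.1
  have hsq := ps_coeff_sq ι hι.1
  have hcb := ps_coeff_cube ι hι.1
  have hlow : ∀ {j m : ℕ}, m < j → PowerSeries.coeff (R := R) m (ι ^ j) = 0 :=
    fun {j m} hm => ps_pow_low hι.1 hm
  have hI1 : PowerSeries.coeff (R := R) 1 ι = -1 := by
    have h := congrArg (PowerSeries.coeff (R := R) 1) hι.2
    rw [pcoeff_substSeries] at h
    simp [Finset.sum_range_succ, PowerSeries.coeff_X_pow_mul', hι0, hF00, hF10, hF01, hF11]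
      at h
    linear_combination h
  have hI2 : PowerSeries.coeff (R := R) 2 ι = a₁₁ := by
    have h := congrArg (PowerSeries.coeff (R := R) 2) hι.2
    rw [pcoeff_substSeries] at h
    simp [Finset.sum_range_succ, PowerSeries.coeff_X_pow_mul', hι0, hI1, hF00, hF10, hF01,
      hF11, hF20, hF02, hF21, hF12, hF22, hsq.1, hlow (by norm_num : (0:ℕ) < 1),
      hlow (by norm_num : (1:ℕ) < 2), hlow (by norm_num : (0:ℕ) < 2)] at h
    linear_combination h
  have hI3 : PowerSeries.coeff (R := R) 3 ι = -(a₁₁ * a₁₁) := by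
    have h := congrArg (PowerSeries.coeff (R := R) 3) hι.2
    rw [pcoeff_substSeries] at h
    simp [Finset.sum_range_succ, PowerSeries.coeff_X_pow_mul', hι0, hI1, hI2, hF00, hF10,
      hF01, hF11, hF20, hF02, hF21, hF12, hF22, hF30, hF03, hF31, hF13, hsq.1, hsq.2, hcb,
      hlow (by norm_num : (0:ℕ) < 1), hlow (by norm_num : (0:ℕ) < 2),
      hlow (by norm_num : (1:ℕ) < 2), hlow (by norm_num : (0:ℕ) < 3),
      hlow (by norm_num : (1:ℕ) < 3), hlow (by norm_num : (2:ℕ) < 3)] at h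
    linear_combination h
  -- w coefficients
  have hw00 : cf R 0 0 (MvPowerSeries.substSeries
      (fun _ : Unit => (X 1 : MvPowerSeries (Fin 2) R)) ι) = 0 := by
    rw [cf_substSeries_unit]; simp [Finset.sum_range_succ, hι0]
  have hw10 : cf R 1 0 (MvPowerSeries.substSeries
      (fun _ : Unit => (X 1 : MvPowerSeries (Fin 2) R)) ι) = 0 := by
    rw [cf_substSeries_unit]; simp [Finset.sum_range_succ]
  have hw01 : cf R 0 1 (MvPowerSeries.substSeries
      (fun _ : Unit => (X 1 : MvPowerSeries (Fin 2) R)) ι) = -1 := by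
    rw [cf_substSeries_unit]; simp [Finset.sum_range_succ, hI1]
  have hw20 : cf R 2 0 (MvPowerSeries.substSeries
      (fun _ : Unit => (X 1 : MvPowerSeries (Fin 2) R)) ι) = 0 := by
    rw [cf_substSeries_unit]; simp [Finset.sum_range_succ]
  have hw11 : cf R 1 1 (MvPowerSeries.substSeries
      (fun _ : Unit => (X 1 : MvPowerSeries (Fin 2) R)) ι) = 0 := by
    rw [cf_substSeries_unit]; simp [Finset.sum_range_succ]
  have hw02 : cf R 0 2 (MvPowerSeries.substSeries
      (fun _ : Unit => (X 1 : MvPowerSeries (Fin 2) R)) ι) = a₁₁ := by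
    rw [cf_substSeries_unit]; simp [Finset.sum_range_succ, hI2]
  -- w' coefficients
  have hx00 : cf R 0 0 (MvPowerSeries.substSeries
      (fun _ : Unit => (X 0 : MvPowerSeries (Fin 2) R)) ι) = 0 := by
    rw [cf_substSeries_unit]; simp [Finset.sum_range_succ, hι0]
  have hx01 : cf R 0 1 (MvPowerSeries.substSeries
      (fun _ : Unit => (X 0 : MvPowerSeries (Fin 2) R)) ι) = 0 := by
    rw [cf_substSeries_unit]; simp [Finset.sum_range_succ]
  have hx10 : cf R 1 0 (MvPowerSeries.substSeries
      (fun _ : Unit => (X 0 : MvPowerSeries (Fin 2) R)) ι) = -1 := by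
    rw [cf_substSeries_unit]; simp [Finset.sum_range_succ, hI1]
  have hx02 : cf R 0 2 (MvPowerSeries.substSeries
      (fun _ : Unit => (X 0 : MvPowerSeries (Fin 2) R)) ι) = 0 := by
    rw [cf_substSeries_unit]; simp [Finset.sum_range_succ]
  have hx11 : cf R 1 1 (MvPowerSeries.substSeries
      (fun _ : Unit => (X 0 : MvPowerSeries (Fin 2) R)) ι) = 0 := by
    rw [cf_substSeries_unit]; simp [Finset.sum_range_succ]
  have hx20 : cf R 2 0 (MvPowerSeries.substSeries
      (fun _ : Unit => (X 0 : MvPowerSeries (Fin 2) R)) ι) = a₁₁ := by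
    rw [cf_substSeries_unit]; simp [Finset.sum_range_succ, hI2]
  -- u coefficients
  have hu00 : cf R 0 0 (fDiff F ι) = 0 := by
    rw [fDiff, cf_substSeries]
    simp [Finset.sum_range_succ, hF00]
  have hu10 : cf R 1 0 (fDiff F ι) = 1 := by
    rw [fDiff, cf_substSeries]
    simp [Finset.sum_range_succ, cf_mul, pow_succ, hw00, hw10, hF00, hF10, hF01, hF11]
  have hu01 : cf R 0 1 (fDiff F ι) = -1 := by
    rw [fDiff, cf_substSeries]
    simp [Finset.sum_range_succ, cf_mul, pow_succ, hw00, hw01, hF00, hF10, hF01, hF11]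
  have hu20 : cf R 2 0 (fDiff F ι) = 0 := by
    rw [fDiff, cf_substSeries]
    simp [Finset.sum_range_succ, cf_mul, pow_succ, hw00, hw10, hw20, hF00, hF10, hF01,
      hF11, hF20, hF02, hF21, hF12, hF22]
  have hu11 : cf R 1 1 (fDiff F ι) = -a₁₁ := by
    rw [fDiff, cf_substSeries]
    simp [Finset.sum_range_succ, cf_mul, pow_succ, hw00, hw10, hw01, hw20, hw11, hw02,
      hF00, hF10, hF01, hF11, hF20, hF02, hF21, hF12, hF22, hI1]
  have hu02 : cf R 0 2 (fDiff F ι) = a₁₁ := by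
    rw [fDiff, cf_substSeries]
    simp [Finset.sum_range_succ, cf_mul, pow_succ, hw00, hw10, hw01, hw20, hw11, hw02,
      hF00, hF10, hF01, hF11, hF20, hF02, hF21, hF12, hF22]
  -- v coefficients
  have hv00 : cf R 0 0 (fDiffSwap F ι) = 0 := by
    rw [fDiffSwap, cf_substSeries]
    simp [Finset.sum_range_succ, hF00]
  have hv10 : cf R 1 0 (fDiffSwap F ι) = -1 := by
    rw [fDiffSwap, cf_substSeries]
    simp [Finset.sum_range_succ, cf_mul, pow_succ, hx00, hx10, hF00, hF10, hF01, hF11]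
  have hv01 : cf R 0 1 (fDiffSwap F ι) = 1 := by
    rw [fDiffSwap, cf_substSeries]
    simp [Finset.sum_range_succ, cf_mul, pow_succ, hx00, hx01, hF00, hF10, hF01, hF11]
  have hv02 : cf R 0 2 (fDiffSwap F ι) = 0 := by
    rw [fDiffSwap, cf_substSeries]
    simp [Finset.sum_range_succ, cf_mul, pow_succ, hx00, hx01, hx02, hF00, hF10, hF01,
      hF11, hF20, hF02, hF21, hF12, hF22]
  have hv11 : cf R 1 1 (fDiffSwap F ι) = -a₁₁ := by
    rw [fDiffSwap, cf_substSeries]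
    simp [Finset.sum_range_succ, cf_mul, pow_succ, hx00, hx10, hx01, hx20, hx11, hx02,
      hF00, hF10, hF01, hF11, hF20, hF02, hF21, hF12, hF22, hI1]
  have hv20 : cf R 2 0 (fDiffSwap F ι) = a₁₁ := by
    rw [fDiffSwap, cf_substSeries]
    simp [Finset.sum_range_succ, cf_mul, pow_succ, hx00, hx10, hx01, hx20, hx11, hx02,
      hF00, hF10, hF01, hF11, hF20, hF02, hF21, hF12, hF22]
  -- the squared difference
  have hsq2 : ((X 0 - X 1 : MvPowerSeries (Fin 2) R))^2
      = X 0^2 + X 1^2 - (X 0 * X 1 + X 0 * X 1) := by ring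
  -- conclude
  intro d hd
  obtain ⟨m, n, hmn, rfl⟩ :
      ∃ m n : ℕ, m + n < 3 ∧ d = Finsupp.single 0 m + Finsupp.single 1 n :=
    ⟨d 0, d 1, hd, fin2_eq d⟩
  show cf R m n _ = cf R m n _
  have hcase : (m = 0 ∧ n = 0) ∨ (m = 1 ∧ n = 0) ∨ (m = 0 ∧ n = 1) ∨
      (m = 2 ∧ n = 0) ∨ (m = 1 ∧ n = 1) ∨ (m = 0 ∧ n = 2) := by omega
  rcases hcase with ⟨rfl, rfl⟩ | ⟨rfl, rfl⟩ | ⟨rfl, rfl⟩ | ⟨rfl, rfl⟩ | ⟨rfl, rfl⟩ | ⟨rfl, rfl⟩ <;>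
  · rw [cf_substSeries]
    simp [Finset.sum_range_succ, cf_mul, pow_succ, hsq2,
      hu00, hu10, hu01, hu20, hu11, hu02, hv00, hv10, hv01, hv20, hv11, hv02,
      hg00, hg10, hg01, hg20, hg11, hg02]
    try norm_num [Finset.filter_eq']
    try ring
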